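/- Let Z be a tempered distribution on ℝ^n of order ≤ (a,b), i.e., |Z(ξ)| ≤ C·sup_{|α|≤a, |β|≤b} sup_x |x^β ∂^α ξ(x)| for all Schwartz ξ. Then the Fourier transform of Z (i.e., Z ∘ F) is a tempered distribution of order ≤ (b, a+n+1). -/

import Mathlib

open MeasureTheory
open scoped ContDiff

/-- Partial derivative in the `i`-th coordinate direction. -/
noncomputable def dirD {n : ℕ} (i : Fin n) (g : EuclideanSpace ℝ (Fin n) → ℂ) :
    EuclideanSpace ℝ (Fin n) → ℂ :=
  fun x => fderiv ℝ g x (EuclideanSpace.single i 1)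

/-- The multi-index derivative `∂^α`. -/
noncomputable def mulDiff {n : ℕ} (α : Fin n → ℕ) (g : EuclideanSpace ℝ (Fin n) → ℂ) :
    EuclideanSpace ℝ (Fin n) → ℂ :=
  (List.finRange n).foldr (fun i h => (dirD i)^[α i] h) g

/-- A tempered distribution `Z` on `ℝ^n` has order `≤ (a, b)` if
`|Z ξ| ≤ C · sup_{|α| ≤ a, |β| ≤ b} sup_x |x^β ∂^α ξ(x)|` for all Schwartz `ξ`. -/
def HasOrder {n : ℕ} (Z : (EuclideanSpace ℝ (Fin n) → ℂ) → ℂ) (a b : ℕ) : Prop :=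
  ∃ C > (0 : ℝ), ∀ ξ : SchwartzMap (EuclideanSpace ℝ (Fin n)) ℂ, ∀ M : ℝ,
    (∀ (α β : Fin n → ℕ) (x : EuclideanSpace ℝ (Fin n)),
      (∑ i, α i) ≤ a → (∑ i, β i) ≤ b →
      |∏ i, (x i) ^ (β i)| * ‖mulDiff α (⇑ξ) x‖ ≤ M) →
    ‖Z ξ‖ ≤ C * M

/-- The Fourier transform on `ℝ^n` with the standard character `e^{2πi⟨x,y⟩}`. -/
noncomputable def FourT {n : ℕ} (ξ : EuclideanSpace ℝ (Fin n) → ℂ)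
    (y : EuclideanSpace ℝ (Fin n)) : ℂ :=
  ∫ x, ξ x * Complex.exp (2 * Real.pi * Complex.I * ((inner ℝ y x : ℝ) : ℂ))

namespace Stmt7

variable {n : ℕ}

/-- iterated directional derivative along a list (head applied last/outermost). -/
noncomputable def dL (l : List (Fin n)) (g : EuclideanSpace ℝ (Fin n) → ℂ) :
    EuclideanSpace ℝ (Fin n) → ℂ :=
  l.foldr (fun i h => dirD i h) g

@[simp] lemma dL_nil (g : EuclideanSpace ℝ (Fin n) → ℂ) : dL [] g = g := rfl

@[simp] lemma dL_cons (i : Fin n) (l : List (Fin n)) (g : EuclideanSpace ℝ (Fin n) → ℂ) :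
    dL (i :: l) g = dirD i (dL l g) := rfl

lemma dL_append (l₁ l₂ : List (Fin n)) (g : EuclideanSpace ℝ (Fin n) → ℂ) :
    dL (l₁ ++ l₂) g = dL l₁ (dL l₂ g) := by
  simp [dL, List.foldr_append]

lemma dirD_smooth (i : Fin n) {g : EuclideanSpace ℝ (Fin n) → ℂ}
    (hg : ContDiff ℝ ∞ g) : ContDiff ℝ ∞ (dirD i g) := by
  have h1 : ContDiff ℝ ∞ (fderiv ℝ g) := hg.fderiv_right (m := ∞) (by simp)
  exact (ContinuousLinearMap.apply ℝ ℂ (EuclideanSpace.single i 1)).contDiff.comp h1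

lemma dL_smooth (l : List (Fin n)) {g : EuclideanSpace ℝ (Fin n) → ℂ}
    (hg : ContDiff ℝ ∞ g) : ContDiff ℝ ∞ (dL l g) := by
  induction l with
  | nil => exact hg
  | cons i l ih => exact dirD_smooth i ih

/-- commute a continuous linear map out of an fderiv applied to a vector -/
lemma fderiv_clm_apply' {M : Type*} [NormedAddCommGroup M] [NormedSpace ℝ M]
    (A : M →L[ℝ] ℂ) {F : EuclideanSpace ℝ (Fin n) → M} {x : EuclideanSpace ℝ (Fin n)}
    (hF : DifferentiableAt ℝ F x) (v : EuclideanSpace ℝ (Fin n)) :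
    fderiv ℝ (fun y => A (F y)) x v = A (fderiv ℝ F x v) := by
  have := (A.hasFDerivAt.comp x hF.hasFDerivAt).fderiv
  rw [show (fun y => A (F y)) = A ∘ F from rfl, this]
  rfl

lemma dTuple {m : ℕ} (r : Fin m → Fin n) {g : EuclideanSpace ℝ (Fin n) → ℂ}
    (hg : ContDiff ℝ ∞ g) (x : EuclideanSpace ℝ (Fin n)) :
    dL (List.ofFn r) g x
      = iteratedFDeriv ℝ m g x (fun j => EuclideanSpace.single (r j) 1) := by
  induction m generalizing x with
  | zero => simp [dL]
  | succ m ih =>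
    rw [List.ofFn_succ, iteratedFDeriv_succ_apply_left]
    have hdiff : DifferentiableAt ℝ (iteratedFDeriv ℝ m g) x := by
      have hm : (m : WithTop ℕ∞) < ∞ := by
        exact_mod_cast WithTop.coe_lt_coe.2 (ENat.coe_lt_top m)
      exact (ContDiff.differentiable_iteratedFDeriv hm hg) x
    have hA := fderiv_clm_apply'
      (ContinuousMultilinearMap.apply ℝ (fun _ : Fin m => EuclideanSpace ℝ (Fin n)) ℂ
        (fun j => EuclideanSpace.single (r j.succ) 1))
      hdiff (EuclideanSpace.single (r 0) 1)
    have heq : (fun y => iteratedFDeriv ℝ m g y (fun j => EuclideanSpace.single (r j.succ) 1))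
        = dL (List.ofFn (fun j : Fin m => r j.succ)) g := by
      funext y
      exact (ih (fun j => r j.succ) y).symm
    calc dL (r 0 :: List.ofFn fun j : Fin m => r j.succ) g x
        = fderiv ℝ (dL (List.ofFn fun j : Fin m => r j.succ) g) x
            (EuclideanSpace.single (r 0) 1) := rfl
      _ = fderiv ℝ (fun y => iteratedFDeriv ℝ m g y
            (fun j => EuclideanSpace.single (r j.succ) 1)) x (EuclideanSpace.single (r 0) 1) := by
          rw [heq]
      _ = (fderiv ℝ (iteratedFDeriv ℝ m g) x (EuclideanSpace.single (r 0) 1))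
            (fun j => EuclideanSpace.single (r j.succ) 1) := hA
      _ = _ := rfl

lemma dL_eval (l : List (Fin n)) {g : EuclideanSpace ℝ (Fin n) → ℂ}
    (hg : ContDiff ℝ ∞ g) (x : EuclideanSpace ℝ (Fin n)) :
    dL l g x = iteratedFDeriv ℝ l.length g x (fun j => EuclideanSpace.single (l.get j) 1) := by
  have := dTuple (fun j => l.get j) hg x
  rwa [List.ofFn_get] at this

end Stmt7

namespace Stmt7
variable {n : ℕ}

lemma dirD_comm (i j : Fin n) {g : EuclideanSpace ℝ (Fin n) → ℂ}
    (hg : ContDiff ℝ ∞ g) : dirD i (dirD j g) = dirD j (dirD i g) := by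
  funext x
  have hdg : ∀ (k : Fin n), dirD k g = fun y =>
      (ContinuousLinearMap.apply ℝ ℂ (EuclideanSpace.single k 1)) (fderiv ℝ g y) := by
    intro k; rfl
  have hfd : DifferentiableAt ℝ (fderiv ℝ g) x :=
    (hg.fderiv_right (m := ∞) (by simp)).differentiable (by simp) x
  have key : ∀ (k l : Fin n), dirD k (dirD l g) x
      = fderiv ℝ (fderiv ℝ g) x (EuclideanSpace.single k 1) (EuclideanSpace.single l 1) := by
    intro k l
    show fderiv ℝ (dirD l g) x (EuclideanSpace.single k 1) = _
    rw [hdg l]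
    exact fderiv_clm_apply' (ContinuousLinearMap.apply ℝ ℂ (EuclideanSpace.single l 1)) hfd _
  rw [key i j, key j i]
  exact (hg.contDiffAt.isSymmSndFDerivAt (by
    rw [show ((2:WithTop ℕ∞)) = ((2:ℕ∞) : WithTop ℕ∞) by rfl]
    rw [minSmoothness_of_isRCLikeNormedField]
    exact WithTop.coe_le_coe.2 le_top)).eq _ _

lemma dL_perm {l l' : List (Fin n)} (h : l.Perm l') {g : EuclideanSpace ℝ (Fin n) → ℂ}
    (hg : ContDiff ℝ ∞ g) : dL l g = dL l' g := by
  induction h with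
  | nil => rfl
  | cons a _ ih => simp only [dL_cons, ih]
  | swap a b l => exact dirD_comm b a (dL_smooth l hg)
  | trans _ _ ih₁ ih₂ => rw [ih₁, ih₂]

lemma iterate_dirD (i : Fin n) (k : ℕ) (g : EuclideanSpace ℝ (Fin n) → ℂ) :
    (dirD i)^[k] g = dL (List.replicate k i) g := by
  induction k with
  | zero => rfl
  | succ k ih => rw [Function.iterate_succ_apply', ih, List.replicate_succ, dL_cons]

/-- the sorted list of directions attached to a multi-index -/
def sList (α : Fin n → ℕ) : List (Fin n) :=
  (List.finRange n).foldr (fun i l => List.replicate (α i) i ++ l) []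

lemma mulDiff_eq_dL (α : Fin n → ℕ) (g : EuclideanSpace ℝ (Fin n) → ℂ) :
    mulDiff α g = dL (sList α) g := by
  unfold mulDiff sList
  induction List.finRange n with
  | nil => rfl
  | cons i L ih => rw [List.foldr_cons, List.foldr_cons, ih, iterate_dirD, dL_append]

lemma count_foldr (α : Fin n → ℕ) (j : Fin n) :
    ∀ L : List (Fin n), (L.foldr (fun i l => List.replicate (α i) i ++ l) []).count j
      = (L.map fun i => if j = i then α i else 0).sum := by
  intro L
  induction L with
  | nil => rfl
  | cons i L ih =>
    simp only [List.foldr_cons, List.count_append, ih, List.map_cons, List.sum_cons,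
      List.count_replicate, beq_iff_eq]
    congr 1
    by_cases h : j = i
    · subst h; simp
    · rw [if_neg h, if_neg (Ne.symm h)]

lemma count_sList (α : Fin n → ℕ) (j : Fin n) : (sList α).count j = α j := by
  rw [sList, count_foldr]
  have : ∀ L : List (Fin n), L.Nodup →
      (L.map fun i => if j = i then α i else 0).sum = if j ∈ L then α j else 0 := by
    intro L hL
    induction L with
    | nil => simp
    | cons i L ih =>
      simp only [List.map_cons, List.sum_cons, List.nodup_cons] at hL ⊢
      rw [ih hL.2]
      by_cases hji : j = i
      · subst hji
        simp [hL.1]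
      · simp [hji, List.mem_cons]
  rw [this _ (List.nodup_finRange n), if_pos (List.mem_finRange j)]

lemma length_sList (α : Fin n → ℕ) : (sList α).length = ∑ i, α i := by
  rw [sList]
  have : ∀ L : List (Fin n),
      (L.foldr (fun i l => List.replicate (α i) i ++ l) []).length = (L.map α).sum := by
    intro L
    induction L with
    | nil => rfl
    | cons i L ih => simp [List.foldr_cons, ih, Function.comp_def]
  rw [this, ← Fin.sum_univ_def]

lemma sum_count (l : List (Fin n)) : ∑ i, l.count i = l.length := by
  induction l with
  | nil => simp
  | cons a l ih =>
    simp only [List.count_cons, List.length_cons]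
    rw [Finset.sum_add_distrib, ih]
    simp [Finset.sum_ite_eq' (Finset.univ : Finset (Fin n))]

/-- any iterated directional derivative equals a `mulDiff` (for smooth `g`) -/
lemma dL_eq_mulDiff (l : List (Fin n)) {g : EuclideanSpace ℝ (Fin n) → ℂ}
    (hg : ContDiff ℝ ∞ g) : dL l g = mulDiff (fun i => l.count i) g := by
  rw [mulDiff_eq_dL]
  apply dL_perm _ hg
  rw [List.perm_iff_count]
  intro j
  rw [count_sList]

end Stmt7

namespace Stmt7
variable {n : ℕ}

lemma coord_le_norm (x : EuclideanSpace ℝ (Fin n)) (i : Fin n) : |x i| ≤ ‖x‖ := by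
  rw [EuclideanSpace.norm_eq, show |x i| = Real.sqrt ((x i) ^ 2) from (Real.sqrt_sq_eq_abs _).symm]
  apply Real.sqrt_le_sqrt
  calc (x i) ^ 2 = ‖x i‖ ^ 2 := by rw [Real.norm_eq_abs, sq_abs]
    _ ≤ ∑ j, ‖x j‖ ^ 2 := Finset.single_le_sum (f := fun j => ‖x j‖ ^ 2)
        (fun _ _ => sq_nonneg _) (Finset.mem_univ i)

lemma decomp (x : EuclideanSpace ℝ (Fin n)) :
    x = ∑ i, x i • EuclideanSpace.single i (1 : ℝ) := by
  ext j
  rw [show (∑ i, x i • EuclideanSpace.single i (1:ℝ)) j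
      = ∑ i, (x i • EuclideanSpace.single i (1:ℝ)) j from by
    rw [WithLp.ofLp_sum]; exact Finset.sum_apply j _ _]
  simp [EuclideanSpace.single_apply]

lemma multilin_bound {m : ℕ}
    (T : ContinuousMultilinearMap ℝ (fun _ : Fin m => EuclideanSpace ℝ (Fin n)) ℂ) :
    ‖T‖ ≤ ∑ r : Fin m → Fin n, ‖T (fun j => EuclideanSpace.single (r j) 1)‖ := by
  apply ContinuousMultilinearMap.opNorm_le_bound
    (Finset.sum_nonneg fun _ _ => norm_nonneg _)
  intro v
  have hv : v = fun j => ∑ i, (v j) i • EuclideanSpace.single i (1:ℝ) := by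
    funext j; exact decomp (v j)
  conv_lhs => rw [hv]
  rw [show T (fun j => ∑ i, (v j) i • EuclideanSpace.single i (1:ℝ))
      = ∑ r : Fin m → Fin n, T (fun j => (v j) (r j) • EuclideanSpace.single (r j) (1:ℝ)) from by
    exact T.toMultilinearMap.map_sum (fun j i => (v j) i • EuclideanSpace.single i (1:ℝ))]
  calc ‖∑ r : Fin m → Fin n, T (fun j => (v j) (r j) • EuclideanSpace.single (r j) (1:ℝ))‖
      ≤ ∑ r : Fin m → Fin n, ‖T (fun j => (v j) (r j) • EuclideanSpace.single (r j) (1:ℝ))‖ :=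
        norm_sum_le _ _
    _ ≤ ∑ r : Fin m → Fin n, ‖T (fun j => EuclideanSpace.single (r j) 1)‖ * ∏ j, ‖v j‖ := by
        apply Finset.sum_le_sum
        intro r _
        rw [show (fun j => (v j) (r j) • EuclideanSpace.single (r j) (1:ℝ))
            = fun j => (v j) (r j) • (fun j' => EuclideanSpace.single (r j') (1:ℝ)) j from rfl,
          T.map_smul_univ]
        rw [norm_smul]
        rw [mul_comm]
        apply mul_le_mul_of_nonneg_left _ (norm_nonneg _)
        calc ‖∏ j, (v j) (r j)‖ = ∏ j, |(v j) (r j)| := by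
              rw [Real.norm_eq_abs, Finset.abs_prod]
          _ ≤ ∏ j, ‖v j‖ := Finset.prod_le_prod (fun _ _ => abs_nonneg _)
              (fun j _ => coord_le_norm (v j) (r j))
    _ = (∑ r : Fin m → Fin n, ‖T (fun j => EuclideanSpace.single (r j) 1)‖) * ∏ j, ‖v j‖ := by
        rw [← Finset.sum_mul]

end Stmt7

namespace Stmt7
variable {n : ℕ}

lemma l2_le_l1 (x : EuclideanSpace ℝ (Fin n)) : ‖x‖ ≤ ∑ i, |x i| := by
  rw [EuclideanSpace.norm_eq]
  rw [show ∑ i, |x i| = Real.sqrt ((∑ i, |x i|) ^ 2) from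
    (Real.sqrt_sq (Finset.sum_nonneg fun _ _ => abs_nonneg _)).symm]
  apply Real.sqrt_le_sqrt
  calc ∑ i, ‖x i‖ ^ 2 = ∑ i, |x i| * |x i| := by
        simp [Real.norm_eq_abs, sq]
    _ ≤ ∑ i, |x i| * (∑ j, |x j|) := Finset.sum_le_sum fun i _ =>
        mul_le_mul_of_nonneg_left (Finset.single_le_sum (f := fun j => |x j|)
          (fun _ _ => abs_nonneg _) (Finset.mem_univ i)) (abs_nonneg _)
    _ = (∑ i, |x i|) ^ 2 := by rw [← Finset.sum_mul, sq]

lemma one_add_norm_pow_le (v : EuclideanSpace ℝ (Fin n)) (N : ℕ) :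
    (1 + ‖v‖) ^ (N + 1) ≤ (n + 1 : ℝ) ^ N * (1 + ∑ i, |v i| ^ (N + 1)) := by
  set w : Fin (n + 1) → ℝ := Fin.cons 1 (fun i => |v i|) with hw
  have hwnn : ∀ j ∈ Finset.univ, 0 ≤ w (j : Fin (n+1)) := by
    intro j _
    refine Fin.cases ?_ ?_ j <;> simp [hw, abs_nonneg]
  have h1 : 1 + ‖v‖ ≤ ∑ j, w j := by
    rw [Fin.sum_cons]
    exact add_le_add_right (l2_le_l1 v) 1
  have h2 : (1 + ‖v‖) ^ (N + 1) ≤ (∑ j, w j) ^ (N + 1) := by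
    apply pow_le_pow_left₀ (by positivity) h1
  have h3 := pow_sum_div_card_le_sum_pow (s := Finset.univ) (f := w) hwnn N
  rw [Finset.card_univ, Fintype.card_fin] at h3
  have h4 : (∑ j, w j) ^ (N + 1) ≤ (n + 1 : ℝ) ^ N * ∑ j, w j ^ (N + 1) := by
    rw [div_le_iff₀ (by positivity)] at h3
    calc (∑ j, w j) ^ (N + 1) ≤ (∑ j, w j ^ (N + 1)) * (n + 1 : ℝ) ^ N := by
          exact_mod_cast h3
      _ = _ := by ring
  have h5 : ∑ j, w j ^ (N + 1) = 1 + ∑ i, |v i| ^ (N + 1) := by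
    rw [hw]; simp [Fin.sum_univ_succ]
  calc (1 + ‖v‖) ^ (N + 1) ≤ (∑ j, w j) ^ (N + 1) := h2
    _ ≤ (n + 1 : ℝ) ^ N * ∑ j, w j ^ (N + 1) := h4
    _ = _ := by rw [h5]

lemma mulDiff_zero (g : EuclideanSpace ℝ (Fin n) → ℂ) : mulDiff (fun _ => 0) g = g := by
  unfold mulDiff
  induction List.finRange n with
  | nil => rfl
  | cons i L ih => rw [List.foldr_cons, ih]; rfl

/-- weighted pointwise bound on a single `mulDiff` from the monomial hypothesis -/
lemma weighted_mulDiff_bound (a b : ℕ) {ξ : SchwartzMap (EuclideanSpace ℝ (Fin n)) ℂ} {M : ℝ}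
    (hM : ∀ (α β : Fin n → ℕ) (x : EuclideanSpace ℝ (Fin n)),
      (∑ i, α i) ≤ b → (∑ i, β i) ≤ a + n + 1 →
      |∏ i, (x i) ^ (β i)| * ‖mulDiff α (⇑ξ) x‖ ≤ M)
    {α : Fin n → ℕ} (hα : (∑ i, α i) ≤ b) {N : ℕ} (hN : N + 1 ≤ a + n + 1)
    (v : EuclideanSpace ℝ (Fin n)) :
    (1 + ‖v‖) ^ (N + 1) * ‖mulDiff α (⇑ξ) v‖ ≤ (n + 1 : ℝ) ^ (N + 1) * M := by
  have hMnn : 0 ≤ M := by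
    have := hM (fun _ => 0) (fun _ => 0) 0 (by simp) (by simp)
    exact le_trans (by positivity) this
  have hbase : ‖mulDiff α (⇑ξ) v‖ ≤ M := by
    have := hM α (fun _ => 0) v hα (by simp)
    simpa using this
  have hmono : ∀ i : Fin n, |v i| ^ (N + 1) * ‖mulDiff α (⇑ξ) v‖ ≤ M := by
    intro i
    have := hM α (fun k => if k = i then N + 1 else 0) v hα (by simp; omega)
    have hprod : |∏ k, (v k) ^ (if k = i then N + 1 else 0)| = |v i| ^ (N + 1) := by
      rw [show (∏ k, (v k) ^ (if k = i then N + 1 else 0))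
          = ∏ k, (if k = i then (v k) ^ (N+1) else 1) from by
        apply Finset.prod_congr rfl; intro k _; split <;> simp]
      rw [Finset.prod_ite_eq' Finset.univ i (fun k => (v k) ^ (N+1)), if_pos (Finset.mem_univ i),
        abs_pow]
    rwa [hprod] at this
  calc (1 + ‖v‖) ^ (N + 1) * ‖mulDiff α (⇑ξ) v‖
      ≤ ((n + 1 : ℝ) ^ N * (1 + ∑ i, |v i| ^ (N + 1))) * ‖mulDiff α (⇑ξ) v‖ := by
        exact mul_le_mul_of_nonneg_right (one_add_norm_pow_le v N) (norm_nonneg _)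
    _ = (n + 1 : ℝ) ^ N * (‖mulDiff α (⇑ξ) v‖ + ∑ i, |v i| ^ (N + 1) * ‖mulDiff α (⇑ξ) v‖) := by
        rw [← Finset.sum_mul]; ring
    _ ≤ (n + 1 : ℝ) ^ N * (M + ∑ i : Fin n, M) := by
        apply mul_le_mul_of_nonneg_left _ (by positivity)
        exact add_le_add hbase (Finset.sum_le_sum fun i _ => hmono i)
    _ = (n + 1 : ℝ) ^ N * ((n + 1 : ℝ) * M) := by
        rw [Finset.sum_const, Finset.card_univ, Fintype.card_fin, nsmul_eq_mul]
        push_cast; ring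
    _ = (n + 1 : ℝ) ^ (N + 1) * M := by ring

end Stmt7

namespace Stmt7
variable {n : ℕ}

lemma iFD_le_sum_mulDiff (p2 : ℕ) (ξ : SchwartzMap (EuclideanSpace ℝ (Fin n)) ℂ)
    (v : EuclideanSpace ℝ (Fin n)) :
    ‖iteratedFDeriv ℝ p2 (⇑ξ) v‖ ≤
      ∑ r : Fin p2 → Fin n, ‖mulDiff (fun i => (List.ofFn r).count i) (⇑ξ) v‖ := by
  have hsm : ContDiff ℝ ∞ (⇑ξ) := ξ.smooth ⊤
  apply (multilin_bound (iteratedFDeriv ℝ p2 (⇑ξ) v)).trans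
  apply le_of_eq
  apply Finset.sum_congr rfl
  intro r _
  rw [← dTuple r hsm v, dL_eq_mulDiff _ hsm]

lemma count_ofFn_sum {p2 : ℕ} (r : Fin p2 → Fin n) :
    ∑ i, (List.ofFn r).count i = p2 := by
  rw [sum_count, List.length_ofFn]

/-- the integrability constant -/
noncomputable def In (n : ℕ) : ℝ :=
  ∫ v : EuclideanSpace ℝ (Fin n), (1 + ‖v‖) ^ (-((n : ℝ) + 1))

lemma In_nonneg : 0 ≤ In n :=
  integral_nonneg fun v => Real.rpow_nonneg (by positivity) _

lemma In_integrable :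
    Integrable (fun v : EuclideanSpace ℝ (Fin n) => (1 + ‖v‖) ^ (-((n : ℝ) + 1))) := by
  apply integrable_one_add_norm
  rw [finrank_euclideanSpace_fin]
  exact lt_add_one _

/-- full pointwise bound for the Schwartz function itself -/
lemma pointwise_bound (a b : ℕ) {ξ : SchwartzMap (EuclideanSpace ℝ (Fin n)) ℂ} {M : ℝ}
    (hM : ∀ (α β : Fin n → ℕ) (x : EuclideanSpace ℝ (Fin n)),
      (∑ i, α i) ≤ b → (∑ i, β i) ≤ a + n + 1 →
      |∏ i, (x i) ^ (β i)| * ‖mulDiff α (⇑ξ) x‖ ≤ M)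
    {p1 p2 : ℕ} (hp1 : p1 ≤ a) (hp2 : p2 ≤ b) (u : EuclideanSpace ℝ (Fin n)) :
    ‖u‖ ^ p1 * ‖iteratedFDeriv ℝ p2 (⇑ξ) u‖ ≤
      (1 + ‖u‖) ^ (-((n : ℝ) + 1)) * ((n + 1 : ℝ) ^ b * (n + 1 : ℝ) ^ (a + n + 1) * M) := by
  have hMnn : 0 ≤ M := by
    have := hM (fun _ => 0) (fun _ => 0) 0 (by simp) (by simp)
    exact le_trans (by positivity) this
  have h1pos : (0:ℝ) < 1 + ‖u‖ := by positivity
  -- weighted bound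
  have key : (1 + ‖u‖) ^ (p1 + n + 1) * ‖iteratedFDeriv ℝ p2 (⇑ξ) u‖ ≤
      (n + 1 : ℝ) ^ b * (n + 1 : ℝ) ^ (a + n + 1) * M := by
    calc (1 + ‖u‖) ^ (p1 + n + 1) * ‖iteratedFDeriv ℝ p2 (⇑ξ) u‖
        ≤ (1 + ‖u‖) ^ (p1 + n + 1) *
            ∑ r : Fin p2 → Fin n, ‖mulDiff (fun i => (List.ofFn r).count i) (⇑ξ) u‖ :=
          mul_le_mul_of_nonneg_left (iFD_le_sum_mulDiff p2 ξ u) (by positivity)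
      _ = ∑ r : Fin p2 → Fin n,
            (1 + ‖u‖) ^ ((p1 + n) + 1) * ‖mulDiff (fun i => (List.ofFn r).count i) (⇑ξ) u‖ := by
          rw [Finset.mul_sum]
      _ ≤ ∑ _r : Fin p2 → Fin n, (n + 1 : ℝ) ^ ((p1 + n) + 1) * M := by
          apply Finset.sum_le_sum
          intro r _
          exact weighted_mulDiff_bound a b hM
            (by rw [count_ofFn_sum]; exact hp2) (by omega) u
      _ = (Fintype.card (Fin p2 → Fin n) : ℝ) * ((n + 1 : ℝ) ^ ((p1 + n) + 1) * M) := by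
          rw [Finset.sum_const, Finset.card_univ, nsmul_eq_mul]
      _ ≤ (n + 1 : ℝ) ^ b * ((n + 1 : ℝ) ^ (a + n + 1) * M) := by
          apply mul_le_mul
          · rw [Fintype.card_fun, Fintype.card_fin, Fintype.card_fin]
            push_cast
            calc ((n:ℝ)) ^ p2 ≤ (n + 1 : ℝ) ^ p2 :=
                  pow_le_pow_left₀ (by positivity) (by linarith) _
              _ ≤ (n + 1 : ℝ) ^ b := pow_le_pow_right₀ (by linarith) hp2
          · apply mul_le_mul_of_nonneg_right _ hMnn
            apply pow_le_pow_right₀ (by linarith)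
            omega
          · positivity
          · positivity
      _ = _ := by ring
  -- now divide by (1+‖u‖)^(n+1)
  have hrpow : (1 + ‖u‖) ^ (-((n : ℝ) + 1)) = ((1 + ‖u‖) ^ (n + 1 : ℕ))⁻¹ := by
    rw [← Real.rpow_natCast (1 + ‖u‖) (n + 1), ← Real.rpow_neg (le_of_lt h1pos)]
    push_cast
    ring_nf
  rw [hrpow, inv_mul_eq_div, le_div_iff₀ (by positivity)]
  calc ‖u‖ ^ p1 * ‖iteratedFDeriv ℝ p2 (⇑ξ) u‖ * (1 + ‖u‖) ^ (n + 1 : ℕ)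
      ≤ (1 + ‖u‖) ^ p1 * ‖iteratedFDeriv ℝ p2 (⇑ξ) u‖ * (1 + ‖u‖) ^ (n + 1 : ℕ) := by
        apply mul_le_mul_of_nonneg_right _ (by positivity)
        apply mul_le_mul_of_nonneg_right _ (norm_nonneg _)
        exact pow_le_pow_left₀ (norm_nonneg _) (by linarith) _
    _ = (1 + ‖u‖) ^ (p1 + n + 1) * ‖iteratedFDeriv ℝ p2 (⇑ξ) u‖ := by
        rw [show p1 + n + 1 = p1 + (n + 1) from by omega, pow_add]
        ring
    _ ≤ _ := key

end Stmt7

namespace Stmt7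
variable {n : ℕ}

lemma iFD_neg (ξ : SchwartzMap (EuclideanSpace ℝ (Fin n)) ℂ) (m : ℕ)
    (v : EuclideanSpace ℝ (Fin n)) :
    ‖iteratedFDeriv ℝ m (fun x => ξ (-x)) v‖ = ‖iteratedFDeriv ℝ m (⇑ξ) (-v)‖ := by
  have := LinearIsometryEquiv.norm_iteratedFDeriv_comp_right
    (𝕜 := ℝ) (LinearIsometryEquiv.neg ℝ (E := EuclideanSpace ℝ (Fin n))) (⇑ξ) v m
  simpa [Function.comp_def] using this

lemma integrable_pow_mul_iFD_neg (ξ : SchwartzMap (EuclideanSpace ℝ (Fin n)) ℂ) (k m : ℕ) :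
    Integrable (fun v : EuclideanSpace ℝ (Fin n) =>
      ‖v‖ ^ k * ‖iteratedFDeriv ℝ m (fun x => ξ (-x)) v‖) := by
  have base : Integrable (fun v : EuclideanSpace ℝ (Fin n) =>
      ‖v‖ ^ k * ‖iteratedFDeriv ℝ m (⇑ξ) v‖) :=
    SchwartzMap.integrable_pow_mul_iteratedFDeriv (μ := volume) ξ k m
  have : (fun v : EuclideanSpace ℝ (Fin n) => ‖v‖ ^ k * ‖iteratedFDeriv ℝ m (fun x => ξ (-x)) v‖)
      = (fun v : EuclideanSpace ℝ (Fin n) => ‖v‖ ^ k * ‖iteratedFDeriv ℝ m (⇑ξ) v‖) ∘ Neg.neg := by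
    funext v
    simp only [Function.comp_apply, norm_neg, iFD_neg]
  rw [this]
  exact ((Measure.measurePreserving_neg volume).integrable_comp_emb
    (MeasurableEquiv.neg (EuclideanSpace ℝ (Fin n))).measurableEmbedding).2 base

lemma integral_bound (a b : ℕ) {ξ : SchwartzMap (EuclideanSpace ℝ (Fin n)) ℂ} {M : ℝ}
    (hM : ∀ (α β : Fin n → ℕ) (x : EuclideanSpace ℝ (Fin n)),
      (∑ i, α i) ≤ b → (∑ i, β i) ≤ a + n + 1 →
      |∏ i, (x i) ^ (β i)| * ‖mulDiff α (⇑ξ) x‖ ≤ M)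
    {p1 p2 : ℕ} (hp1 : p1 ≤ a) (hp2 : p2 ≤ b) :
    ∫ v : EuclideanSpace ℝ (Fin n), ‖v‖ ^ p1 * ‖iteratedFDeriv ℝ p2 (fun x => ξ (-x)) v‖ ≤
      (n + 1 : ℝ) ^ b * (n + 1 : ℝ) ^ (a + n + 1) * M * In n := by
  have key : ∀ v : EuclideanSpace ℝ (Fin n),
      ‖v‖ ^ p1 * ‖iteratedFDeriv ℝ p2 (fun x => ξ (-x)) v‖ ≤
      ((n + 1 : ℝ) ^ b * (n + 1 : ℝ) ^ (a + n + 1) * M) * (1 + ‖v‖) ^ (-((n : ℝ) + 1)) := by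
    intro v
    rw [iFD_neg]
    have := pointwise_bound a b hM hp1 hp2 (-v)
    rw [norm_neg] at this
    calc ‖v‖ ^ p1 * ‖iteratedFDeriv ℝ p2 (⇑ξ) (-v)‖
        ≤ (1 + ‖v‖) ^ (-((n : ℝ) + 1)) * ((n + 1 : ℝ) ^ b * (n + 1 : ℝ) ^ (a + n + 1) * M) :=
          this
      _ = _ := by ring
  calc ∫ v : EuclideanSpace ℝ (Fin n), ‖v‖ ^ p1 * ‖iteratedFDeriv ℝ p2 (fun x => ξ (-x)) v‖
      ≤ ∫ v : EuclideanSpace ℝ (Fin n),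
          ((n + 1 : ℝ) ^ b * (n + 1 : ℝ) ^ (a + n + 1) * M) * (1 + ‖v‖) ^ (-((n : ℝ) + 1)) := by
        apply integral_mono_of_nonneg
        · exact ae_of_all _ fun v => by positivity
        · exact In_integrable.const_mul _
        · exact ae_of_all _ key
    _ = (n + 1 : ℝ) ^ b * (n + 1 : ℝ) ^ (a + n + 1) * M * In n := by
        rw [MeasureTheory.integral_const_mul]
        rfl

end Stmt7

namespace Stmt7
open scoped FourierTransform
variable {n : ℕ}

lemma FourT_eq_inv (ξ : EuclideanSpace ℝ (Fin n) → ℂ) : FourT ξ = 𝓕⁻ ξ := by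
  funext y
  rw [Real.fourierInv_eq']
  unfold FourT
  congr 1
  funext v
  rw [smul_eq_mul, mul_comm]
  congr 1
  rw [real_inner_comm]
  push_cast
  ring

lemma FourT_eq_schwartz (ξ : SchwartzMap (EuclideanSpace ℝ (Fin n)) ℂ) :
    FourT ⇑ξ = ⇑((FourierTransform.fourierCLE ℝ (SchwartzMap (EuclideanSpace ℝ (Fin n)) ℂ)).symm ξ) := by
  rw [FourT_eq_inv, FourierTransform.fourierCLE_symm_apply, SchwartzMap.fourierInv_coe]

lemma FourT_eq_fourier (ξ : SchwartzMap (EuclideanSpace ℝ (Fin n)) ℂ) :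
    FourT ⇑ξ = 𝓕 (fun x => ξ (-x)) := by
  rw [FourT_eq_inv, Real.fourierInv_eq_fourier_comp_neg]

/-- the global constant -/
noncomputable def Ktot (n a b : ℕ) : ℝ :=
  (2 * Real.pi) ^ a * (2 * a + 2) ^ b * ((a + 1) * (b + 1)) *
    ((n + 1 : ℝ) ^ b * (n + 1 : ℝ) ^ (a + n + 1)) * In n

lemma Ktot_nonneg (a b : ℕ) : 0 ≤ Ktot n a b := by
  unfold Ktot
  have := In_nonneg (n := n)
  have := Real.pi_pos
  positivity

lemma master (a b : ℕ) {ξ : SchwartzMap (EuclideanSpace ℝ (Fin n)) ℂ} {M : ℝ}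
    (hM : ∀ (α β : Fin n → ℕ) (x : EuclideanSpace ℝ (Fin n)),
      (∑ i, α i) ≤ b → (∑ i, β i) ≤ a + n + 1 →
      |∏ i, (x i) ^ (β i)| * ‖mulDiff α (⇑ξ) x‖ ≤ M)
    (α' β' : Fin n → ℕ) (x : EuclideanSpace ℝ (Fin n))
    (hα' : (∑ i, α' i) ≤ a) (hβ' : (∑ i, β' i) ≤ b) :
    |∏ i, (x i) ^ (β' i)| * ‖mulDiff α' (FourT ⇑ξ) x‖ ≤ Ktot n a b * M := by
  have hMnn : 0 ≤ M := by
    have := hM (fun _ => 0) (fun _ => 0) 0 (by simp) (by simp)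
    exact le_trans (by positivity) this
  set f : EuclideanSpace ℝ (Fin n) → ℂ := fun x => ξ (-x) with hf
  set k := ∑ i, α' i with hk
  set q := ∑ i, β' i with hq
  have hg_smooth : ContDiff ℝ ∞ (FourT ⇑ξ) := by
    rw [FourT_eq_schwartz]
    exact ((FourierTransform.fourierCLE ℝ (SchwartzMap (EuclideanSpace ℝ (Fin n)) ℂ)).symm ξ).smooth ⊤
  -- step 1 : monomial ≤ norm power
  have step1 : |∏ i, (x i) ^ (β' i)| ≤ ‖x‖ ^ q := by
    rw [Finset.abs_prod]
    calc ∏ i, |x i ^ β' i| = ∏ i, |x i| ^ β' i := by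
          simp [abs_pow]
      _ ≤ ∏ i, ‖x‖ ^ β' i := Finset.prod_le_prod (fun _ _ => by positivity)
          (fun i _ => pow_le_pow_left₀ (abs_nonneg _) (coord_le_norm x i) _)
      _ = ‖x‖ ^ q := Finset.prod_pow_eq_pow_sum _ _ _
  -- step 2 : mulDiff ≤ iteratedFDeriv norm
  have step2 : ‖mulDiff α' (FourT ⇑ξ) x‖ ≤ ‖iteratedFDeriv ℝ k (FourT ⇑ξ) x‖ := by
    rw [mulDiff_eq_dL, dL_eval _ hg_smooth x]
    have hlen : (sList α').length = k := length_sList α'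
    calc ‖iteratedFDeriv ℝ (sList α').length (FourT ⇑ξ) x
            (fun j => EuclideanSpace.single ((sList α').get j) 1)‖
        ≤ ‖iteratedFDeriv ℝ (sList α').length (FourT ⇑ξ) x‖ *
            ∏ j, ‖EuclideanSpace.single ((sList α').get j) (1:ℝ)‖ :=
          (iteratedFDeriv ℝ (sList α').length (FourT ⇑ξ) x).le_opNorm _
      _ = ‖iteratedFDeriv ℝ (sList α').length (FourT ⇑ξ) x‖ := by
          rw [show (∏ j, ‖EuclideanSpace.single ((sList α').get j) (1:ℝ)‖) = 1 from by
            rw [Finset.prod_eq_one]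
            intro j _
            rw [EuclideanSpace.norm_single]
            norm_num]
          ring
      _ = ‖iteratedFDeriv ℝ k (FourT ⇑ξ) x‖ := by rw [hlen]
  -- step 3 : Fourier estimate
  have hfs : ContDiff ℝ (⊤ : ℕ∞) f := (ξ.smooth ⊤).comp (contDiff_id.neg)
  have step3 : ‖x‖ ^ q * ‖iteratedFDeriv ℝ k (𝓕 f) x‖ ≤ (2 * Real.pi) ^ k * (2 * k + 2) ^ q *
      ∑ p ∈ Finset.range (k + 1) ×ˢ Finset.range (q + 1),
        ∫ v, ‖v‖ ^ p.1 * ‖iteratedFDeriv ℝ p.2 f v‖ :=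
    Real.pow_mul_norm_iteratedFDeriv_fourier_le (K := (⊤ : ℕ∞)) (N := (⊤ : ℕ∞)) hfs
      (fun k' m' _ _ => integrable_pow_mul_iFD_neg ξ k' m') le_top le_top x
  -- step 4 : bound the sum
  have step4 : ∑ p ∈ Finset.range (k + 1) ×ˢ Finset.range (q + 1),
      ∫ v, ‖v‖ ^ p.1 * ‖iteratedFDeriv ℝ p.2 f v‖ ≤
      ((a + 1) * (b + 1) : ℝ) * ((n + 1 : ℝ) ^ b * (n + 1 : ℝ) ^ (a + n + 1) * M * In n) := by
    have hterm : ∀ p ∈ Finset.range (k + 1) ×ˢ Finset.range (q + 1),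
        (∫ v, ‖v‖ ^ p.1 * ‖iteratedFDeriv ℝ p.2 f v‖) ≤
        (n + 1 : ℝ) ^ b * (n + 1 : ℝ) ^ (a + n + 1) * M * In n := by
      intro p hp
      simp only [Finset.mem_product, Finset.mem_range] at hp
      exact integral_bound a b hM (by omega) (by omega)
    calc ∑ p ∈ Finset.range (k + 1) ×ˢ Finset.range (q + 1),
          ∫ v, ‖v‖ ^ p.1 * ‖iteratedFDeriv ℝ p.2 f v‖
        ≤ (Finset.range (k + 1) ×ˢ Finset.range (q + 1)).card •
            ((n + 1 : ℝ) ^ b * (n + 1 : ℝ) ^ (a + n + 1) * M * In n) :=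
          Finset.sum_le_card_nsmul _ _ _ hterm
      _ = ((k + 1) * (q + 1) : ℝ) * ((n + 1 : ℝ) ^ b * (n + 1 : ℝ) ^ (a + n + 1) * M * In n) := by
          rw [Finset.card_product, Finset.card_range, Finset.card_range, nsmul_eq_mul]
          push_cast
          ring
      _ ≤ ((a + 1) * (b + 1) : ℝ) * ((n + 1 : ℝ) ^ b * (n + 1 : ℝ) ^ (a + n + 1) * M * In n) := by
          apply mul_le_mul_of_nonneg_right
          · have h1 : (k : ℝ) + 1 ≤ (a : ℝ) + 1 := by
              have h := (Nat.cast_le (α := ℝ)).2 hα'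
              linarith
            have h2 : (q : ℝ) + 1 ≤ (b : ℝ) + 1 := by
              have h := (Nat.cast_le (α := ℝ)).2 hβ'
              linarith
            have hm := mul_le_mul h1 h2 (by positivity) (by positivity)
            push_cast
            linarith
          · have := In_nonneg (n := n)
            positivity
    -- coefficients
  have hcoef : (2 * Real.pi) ^ k * (2 * (k:ℝ) + 2) ^ q ≤ (2 * Real.pi) ^ a * (2 * (a:ℝ) + 2) ^ b := by
    have hpi : (1 : ℝ) ≤ 2 * Real.pi := by
      have := Real.pi_gt_three
      linarith
    have hka : (k : ℝ) ≤ (a : ℝ) := Nat.cast_le.2 hα'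
    apply mul_le_mul
    · exact pow_le_pow_right₀ hpi hα'
    · calc (2 * (k:ℝ) + 2) ^ q ≤ (2 * (a:ℝ) + 2) ^ q :=
            pow_le_pow_left₀ (by positivity) (by linarith) _
        _ ≤ (2 * (a:ℝ) + 2) ^ b := pow_le_pow_right₀ (by linarith) hβ'
    · positivity
    · positivity
  -- assemble
  have hFg : FourT ⇑ξ = 𝓕 f := FourT_eq_fourier ξ
  calc |∏ i, (x i) ^ (β' i)| * ‖mulDiff α' (FourT ⇑ξ) x‖
      ≤ ‖x‖ ^ q * ‖iteratedFDeriv ℝ k (FourT ⇑ξ) x‖ :=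
        mul_le_mul step1 step2 (norm_nonneg _) (by positivity)
    _ = ‖x‖ ^ q * ‖iteratedFDeriv ℝ k (𝓕 f) x‖ := by rw [hFg]
    _ ≤ (2 * Real.pi) ^ k * (2 * k + 2) ^ q *
          ∑ p ∈ Finset.range (k + 1) ×ˢ Finset.range (q + 1),
            ∫ v, ‖v‖ ^ p.1 * ‖iteratedFDeriv ℝ p.2 f v‖ := step3
    _ ≤ ((2 * Real.pi) ^ a * (2 * (a:ℝ) + 2) ^ b) *
          (((a + 1) * (b + 1) : ℝ) * ((n + 1 : ℝ) ^ b * (n + 1 : ℝ) ^ (a + n + 1) * M * In n)) := by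
        apply mul_le_mul hcoef step4
        · apply Finset.sum_nonneg
          intro p _
          apply integral_nonneg
          intro v
          positivity
        · have := Real.pi_pos
          positivity
    _ = Ktot n a b * M := by
        unfold Ktot
        push_cast
        ring

end Stmt7

/-- If a tempered distribution `Z` on `ℝ^n` has order `≤ (a,b)`, then its Fourier transform
`Z ∘ F` has order `≤ (b, a + n + 1)`. -/
theorem stmt7 {n : ℕ} (Z : (EuclideanSpace ℝ (Fin n) → ℂ) → ℂ) (a b : ℕ)
    (hZ : HasOrder Z a b) :
    HasOrder (fun ξ => Z (FourT ξ)) b (a + n + 1) := by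
  obtain ⟨C, hC, hbound⟩ := hZ
  refine ⟨C * (Stmt7.Ktot n a b + 1), by
    have := Stmt7.Ktot_nonneg (n := n) a b
    positivity, ?_⟩
  intro ξ M hM
  have hMnn : 0 ≤ M := by
    have := hM (fun _ => 0) (fun _ => 0) 0 (by simp) (by simp)
    exact le_trans (by positivity) this
  have hζ : FourT ⇑ξ = ⇑((FourierTransform.fourierCLE ℝ (SchwartzMap (EuclideanSpace ℝ (Fin n)) ℂ)).symm ξ) :=
    Stmt7.FourT_eq_schwartz ξ
  have key := hbound ((FourierTransform.fourierCLE ℝ (SchwartzMap (EuclideanSpace ℝ (Fin n)) ℂ)).symm ξ) (Stmt7.Ktot n a b * M) ?_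
  · calc ‖Z (FourT ⇑ξ)‖ = ‖Z ⇑((FourierTransform.fourierCLE ℝ (SchwartzMap (EuclideanSpace ℝ (Fin n)) ℂ)).symm ξ)‖ := by rw [hζ]
      _ ≤ C * (Stmt7.Ktot n a b * M) := key
      _ ≤ C * (Stmt7.Ktot n a b + 1) * M := by
          rw [mul_assoc]
          apply mul_le_mul_of_nonneg_left _ (le_of_lt hC)
          apply mul_le_mul_of_nonneg_right _ hMnn
          linarith
  · intro α β x hα hβ
    rw [← hζ]
    exact Stmt7.master a b hM α β x hα hβ
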